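/- Let ε = 1 or ε = -1, let b, c : ℝ → ℝ and η : ℝ → ℝ be smooth, and let λ ∈ ℝ. Define A(t) := (ε/2)(b(t) η(t) − η'(t)) and B(t) := −2 c(t) η(t) + (ε/2)(b'(t) η(t) + b(t)² η(t) − η''(t)). If u : ℝ³ → ℝ is smooth and satisfies ∂x(∂t u + u ∂x u + ∂x² u) + ε ∂y² u + b(t) y ∂x ∂y u + c(t) y² ∂x² u = 0 for all (x,y,t), then the function v(x,y,t) := u(x − A(t)(λ y − λ² η(t)/2), y − λ η(t), t) + B(t)(λ y − λ² η(t)/2) also satisfies this equation for all (x,y,t). (This is the finite form of the symmetry group generated by Y(η) in Theorem 2.) -/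

import Mathlib

/-- Partial derivative in the first (`x`) variable. -/
noncomputable def pdx (u : ℝ → ℝ → ℝ → ℝ) : ℝ → ℝ → ℝ → ℝ :=
  fun x y t => deriv (fun s => u s y t) x

/-- Partial derivative in the second (`y`) variable. -/
noncomputable def pdy (u : ℝ → ℝ → ℝ → ℝ) : ℝ → ℝ → ℝ → ℝ :=
  fun x y t => deriv (fun s => u x s t) y

/-- Partial derivative in the third (`t`) variable. -/
noncomputable def pdt (u : ℝ → ℝ → ℝ → ℝ) : ℝ → ℝ → ℝ → ℝ :=
  fun x y t => deriv (fun s => u x y s) t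

/-- The simplified canonical generalized Burgers equation (eq. (5.7) with `b₀ = c₁ = c₀ = 0`):
`∂x(∂t u + u ∂x u + ∂x² u) + ε ∂y² u + b(t) y ∂x ∂y u + c(t) y² ∂x² u = 0`. -/
def IsSCGB (ε : ℝ) (b c : ℝ → ℝ) (u : ℝ → ℝ → ℝ → ℝ) : Prop :=
  ∀ x y t : ℝ,
    pdx (fun x y t => pdt u x y t + u x y t * pdx u x y t + pdx (pdx u) x y t) x y t
      + ε * pdy (pdy u) x y t + b t * y * pdx (pdy u) x y t
      + c t * y ^ 2 * pdx (pdx u) x y t = 0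

/-- The coefficient `A(t) = (ε/2)(b(t)η(t) − η'(t))`. -/
noncomputable def Acoef (ε : ℝ) (b η : ℝ → ℝ) : ℝ → ℝ :=
  fun t => ε / 2 * (b t * η t - deriv η t)

/-- The coefficient `B(t) = −2c(t)η(t) + (ε/2)(b'(t)η(t) + b(t)²η(t) − η''(t))`. -/
noncomputable def Bcoef (ε : ℝ) (b c η : ℝ → ℝ) : ℝ → ℝ :=
  fun t => -2 * c t * η t + ε / 2 * (deriv b t * η t + (b t) ^ 2 * η t - deriv (deriv η) t)

namespace SCGBaux

abbrev E3 := ℝ × ℝ × ℝ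

def e1 : E3 := (1,0,0)
def e2 : E3 := (0,1,0)
def e3 : E3 := (0,0,1)

noncomputable def pd (v : E3) (F : E3 → ℝ) : E3 → ℝ := fun p => fderiv ℝ F p v

lemma pd_contDiff {F : E3 → ℝ} (hF : ContDiff ℝ (⊤:ℕ∞) F) (v : E3) :
    ContDiff ℝ (⊤:ℕ∞) (pd v F) :=
  (hF.fderiv_right (m := (⊤:ℕ∞)) (by decide)).clm_apply contDiff_const

lemma pd_pd {F : E3 → ℝ} (hF : ContDiff ℝ (⊤:ℕ∞) F) (v w p : E3) :
    pd v (pd w F) p = fderiv ℝ (fderiv ℝ F) p v w := by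
  have h1 : HasFDerivAt (fun q => fderiv ℝ F q w)
      ((fderiv ℝ (fderiv ℝ F) p).flip w) p := by
    have hd : HasFDerivAt (fderiv ℝ F) (fderiv ℝ (fderiv ℝ F) p) p :=
      ((hF.fderiv_right (m := (⊤:ℕ∞)) (by decide)).differentiable (by decide) p).hasFDerivAt
    simpa using hd.clm_apply (hasFDerivAt_const w p)
  show fderiv ℝ (fun q => fderiv ℝ F q w) p v = _
  simpa [pd] using congrArg (fun L : E3 →L[ℝ] ℝ => L v) h1.fderiv

lemma hasDerivAt_comp_curve {G : E3 → ℝ} (hG : Differentiable ℝ G) {γ : ℝ → E3}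
    {V : E3} {s : ℝ} (hγ : HasDerivAt γ V s) :
    HasDerivAt (fun r => G (γ r)) (pd V G (γ s)) s :=
  (hG (γ s)).hasFDerivAt.comp_hasDerivAt s hγ

lemma vec_expand (v : E3) : v = v.1 • e1 + v.2.1 • e2 + v.2.2 • e3 := by
  simp [e1, e2, e3, Prod.ext_iff]

lemma clm_expand (L : E3 →L[ℝ] ℝ) (v : E3) :
    L v = v.1 * L e1 + v.2.1 * L e2 + v.2.2 * L e3 := by
  conv_lhs => rw [vec_expand v]
  simp

lemma clm2_full (M : E3 →L[ℝ] E3 →L[ℝ] ℝ) (v w : E3) :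
    M v w = v.1*w.1*(M e1 e1) + v.1*w.2.1*(M e1 e2) + v.1*w.2.2*(M e1 e3)
      + v.2.1*w.1*(M e2 e1) + v.2.1*w.2.1*(M e2 e2) + v.2.1*w.2.2*(M e2 e3)
      + v.2.2*w.1*(M e3 e1) + v.2.2*w.2.1*(M e3 e2) + v.2.2*w.2.2*(M e3 e3) := by
  have h : M v w = v.1 * (M e1 w) + v.2.1 * (M e2 w) + v.2.2 * (M e3 w) := by
    conv_lhs => rw [vec_expand v]
    simp
  rw [h, clm_expand (M e1) w, clm_expand (M e2) w, clm_expand (M e3) w]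
  ring

end SCGBaux

open SCGBaux in
theorem stmt1 (ε : ℝ) (hε : ε = 1 ∨ ε = -1)
    (b c η : ℝ → ℝ)
    (hb : ContDiff ℝ (⊤ : ℕ∞) b) (hc : ContDiff ℝ (⊤ : ℕ∞) c)
    (hη : ContDiff ℝ (⊤ : ℕ∞) η) (lam : ℝ)
    (u : ℝ → ℝ → ℝ → ℝ)
    (hu : ContDiff ℝ (⊤ : ℕ∞) (fun p : ℝ × ℝ × ℝ => u p.1 p.2.1 p.2.2))
    (heq : IsSCGB ε b c u) :
    IsSCGB ε b c (fun x y t =>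
      u (x - Acoef ε b η t * (lam * y - lam ^ 2 * η t / 2)) (y - lam * η t) t
        + Bcoef ε b c η t * (lam * y - lam ^ 2 * η t / 2)) := by
  classical
  set U : E3 → ℝ := fun p => u p.1 p.2.1 p.2.2 with hUdef
  have hU : ContDiff ℝ (⊤:ℕ∞) U := hu
  -- smoothness of derived objects
  have hUd : Differentiable ℝ U := hU.differentiable (by decide)
  have hU1 : ∀ vv : E3, ContDiff ℝ (⊤:ℕ∞) (pd vv U) := fun vv => pd_contDiff hU vv
  have hU1d : ∀ vv : E3, Differentiable ℝ (pd vv U) :=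
    fun vv => (hU1 vv).differentiable (by decide)
  have hU2d : ∀ vv ww : E3, Differentiable ℝ (pd vv (pd ww U)) :=
    fun vv ww => (pd_contDiff (hU1 ww) vv).differentiable (by decide)
  -- coefficient functions' derivatives
  have hηd : Differentiable ℝ η := hη.differentiable (by decide)
  have hη1 : ContDiff ℝ (⊤:ℕ∞) (deriv η) := (contDiff_infty_iff_deriv.mp hη).2
  have hη1d : Differentiable ℝ (deriv η) := hη1.differentiable (by decide)
  have hη2d : Differentiable ℝ (deriv (deriv η)) :=
    ((contDiff_infty_iff_deriv.mp hη1).2).differentiable (by decide)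
  have hbd : Differentiable ℝ b := hb.differentiable (by decide)
  have hb1d : Differentiable ℝ (deriv b) :=
    ((contDiff_infty_iff_deriv.mp hb).2).differentiable (by decide)
  have hcd : Differentiable ℝ c := hc.differentiable (by decide)
  have hηD : ∀ τ, HasDerivAt η (deriv η τ) τ := fun τ => (hηd τ).hasDerivAt
  have hη'D : ∀ τ, HasDerivAt (deriv η) (deriv (deriv η) τ) τ := fun τ => (hη1d τ).hasDerivAt
  have hbD : ∀ τ, HasDerivAt b (deriv b τ) τ := fun τ => (hbd τ).hasDerivAt
  set A : ℝ → ℝ := Acoef ε b η with hAdef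
  set Bc : ℝ → ℝ := Bcoef ε b c η with hBdef
  set A' : ℝ → ℝ := fun τ => ε/2*(deriv b τ * η τ + b τ * deriv η τ - deriv (deriv η) τ)
    with hA'def
  have hA : ∀ τ, HasDerivAt A (A' τ) τ := by
    intro τ
    have := (((hbD τ).mul (hηD τ)).sub (hη'D τ)).const_mul (ε/2)
    exact this
  have hBdiff : ∀ τ, DifferentiableAt ℝ Bc τ := by
    intro τ
    rw [hBdef]
    unfold Bcoef
    apply DifferentiableAt.add
    · exact (((hcd τ).const_mul (-2)).mul (hηd τ))
    · exact (((((hb1d τ).mul (hηd τ)).add (((hbd τ).pow 2).mul (hηd τ))).sub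
        (hη2d τ)).const_mul (ε/2))
  -- the transformed solution and the change-of-variable map
  set v : ℝ → ℝ → ℝ → ℝ := fun x y t =>
      u (x - A t * (lam * y - lam ^ 2 * η t / 2)) (y - lam * η t) t
        + Bc t * (lam * y - lam ^ 2 * η t / 2) with hvdef
  set P : ℝ → ℝ → ℝ → E3 := fun x y t =>
      (x - A t * (lam * y - lam ^ 2 * η t / 2), y - lam * η t, t) with hPdef
  have hvP : ∀ x y t, v x y t = U (P x y t) + Bc t * (lam * y - lam ^ 2 * η t / 2) :=
    fun _ _ _ => rfl
  -- curve derivatives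
  have hPx : ∀ x y t, HasDerivAt (fun s => P s y t) e1 x := by
    intro x y t
    rw [hPdef]
    exact ((hasDerivAt_id x).sub_const _).prodMk
      ((hasDerivAt_const x _).prodMk (hasDerivAt_const x _))
  have hPy : ∀ x y t, HasDerivAt (fun s => P x s t) (-(A t * lam), 1, 0) y := by
    intro x y t
    rw [hPdef]
    refine HasDerivAt.prodMk ?_ (HasDerivAt.prodMk ?_ (hasDerivAt_const y _))
    · exact (((((hasDerivAt_id y).const_mul lam).sub_const _).const_mul
        (A t)).const_sub x).congr_deriv (by ring)
    · exact (hasDerivAt_id y).sub_const _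
  have hWt : ∀ y t, HasDerivAt (fun s => lam * y - lam ^ 2 * η s / 2)
      (-(lam ^ 2 * deriv η t / 2)) t := by
    intro y t
    exact (((hηD t).const_mul (lam ^ 2)).div_const 2).const_sub (lam * y)
  have hPt : ∀ x y t, HasDerivAt (fun s => P x y s)
      (-(A' t * (lam * y - lam ^ 2 * η t / 2) + A t * -(lam ^ 2 * deriv η t / 2)),
        -(lam * deriv η t), 1) t := by
    intro x y t
    rw [hPdef]
    refine HasDerivAt.prodMk ?_ (HasDerivAt.prodMk ?_ (hasDerivAt_id t))
    · exact ((hA t).mul (hWt y t)).const_sub x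
    · exact ((hηD t).const_mul lam).const_sub y
  -- first-order derivatives of v
  have hv_x : ∀ x y t, pdx v x y t = pd e1 U (P x y t) := by
    intro x y t
    show deriv (fun s => v s y t) x = _
    refine HasDerivAt.deriv ?_
    simp only [hvP]
    exact (hasDerivAt_comp_curve hUd (hPx x y t)).add_const _
  have hv_y : ∀ x y t, pdy v x y t =
      pd (-(A t * lam), 1, 0) U (P x y t) + Bc t * lam := by
    intro x y t
    show deriv (fun s => v x s t) y = _
    refine HasDerivAt.deriv ?_
    simp only [hvP]
    refine HasDerivAt.add (hasDerivAt_comp_curve hUd (hPy x y t)) ?_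
    exact ((((hasDerivAt_id y).const_mul lam).sub_const _).const_mul (Bc t)).congr_deriv
      (by ring)
  have hv_t : ∀ x y t, pdt v x y t =
      pd (-(A' t * (lam * y - lam ^ 2 * η t / 2) + A t * -(lam ^ 2 * deriv η t / 2)),
        -(lam * deriv η t), 1) U (P x y t)
        + deriv (fun s => Bc s * (lam * y - lam ^ 2 * η s / 2)) t := by
    intro x y t
    show deriv (fun s => v x y s) t = _
    simp only [hvP]
    rw [deriv_fun_add ((hasDerivAt_comp_curve hUd (hPt x y t)).differentiableAt)
      (((hBdiff t).fun_mul (hWt y t).differentiableAt))]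
    rw [(hasDerivAt_comp_curve hUd (hPt x y t)).deriv]
  -- second-order derivatives of v
  have hv_xx : ∀ x y t, pdx (pdx v) x y t = pd e1 (pd e1 U) (P x y t) := by
    intro x y t
    show deriv (fun s => pdx v s y t) x = _
    refine HasDerivAt.deriv ?_
    simp only [hv_x]
    exact hasDerivAt_comp_curve (hU1d e1) (hPx x y t)
  have hv_xxx : ∀ x y t, pdx (pdx (pdx v)) x y t =
      pd e1 (pd e1 (pd e1 U)) (P x y t) := by
    intro x y t
    show deriv (fun s => pdx (pdx v) s y t) x = _
    refine HasDerivAt.deriv ?_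
    simp only [hv_xx]
    exact hasDerivAt_comp_curve (hU2d e1 e1) (hPx x y t)
  have hv_yy : ∀ x y t, pdy (pdy v) x y t =
      pd (-(A t * lam), 1, 0) (pd (-(A t * lam), 1, 0) U) (P x y t) := by
    intro x y t
    show deriv (fun s => pdy v x s t) y = _
    refine HasDerivAt.deriv ?_
    simp only [hv_y]
    exact (hasDerivAt_comp_curve (hU1d _) (hPy x y t)).add_const _
  have hv_xy : ∀ x y t, pdx (pdy v) x y t =
      pd e1 (pd (-(A t * lam), 1, 0) U) (P x y t) := by
    intro x y t
    show deriv (fun s => pdy v s y t) x = _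
    refine HasDerivAt.deriv ?_
    simp only [hv_y]
    exact (hasDerivAt_comp_curve (hU1d _) (hPx x y t)).add_const _
  -- the first group of the equation for v
  have hterm1 : ∀ x y t,
      pdx (fun x y t => pdt v x y t + v x y t * pdx v x y t + pdx (pdx v) x y t) x y t =
      pd e1 (pd (-(A' t * (lam * y - lam ^ 2 * η t / 2) + A t * -(lam ^ 2 * deriv η t / 2)),
          -(lam * deriv η t), 1) U) (P x y t)
        + (pd e1 U (P x y t) * pd e1 U (P x y t)
          + (U (P x y t) + Bc t * (lam * y - lam ^ 2 * η t / 2)) * pd e1 (pd e1 U) (P x y t))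
        + pd e1 (pd e1 (pd e1 U)) (P x y t) := by
    intro x y t
    show deriv (fun s => pdt v s y t + v s y t * pdx v s y t + pdx (pdx v) s y t) x = _
    refine HasDerivAt.deriv ?_
    simp only [hv_t, hvP, hv_x, hv_xx]
    refine HasDerivAt.add (HasDerivAt.add ?_ ?_) ?_
    · exact (hasDerivAt_comp_curve (hU1d _) (hPx x y t)).add_const _
    · exact ((hasDerivAt_comp_curve hUd (hPx x y t)).add_const _).mul
        (hasDerivAt_comp_curve (hU1d e1) (hPx x y t))
    · exact hasDerivAt_comp_curve (hU2d e1 e1) (hPx x y t)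
  -- derivatives of u in pd form
  have hQx : ∀ (X Y T : ℝ), HasDerivAt (fun s => ((s, Y, T) : E3)) e1 X := by
    intro X Y T
    exact (hasDerivAt_id X).prodMk ((hasDerivAt_const X _).prodMk (hasDerivAt_const X _))
  have hQy : ∀ (X Y T : ℝ), HasDerivAt (fun s => ((X, s, T) : E3)) e2 Y := by
    intro X Y T
    exact (hasDerivAt_const Y _).prodMk ((hasDerivAt_id Y).prodMk (hasDerivAt_const Y _))
  have hQt : ∀ (X Y T : ℝ), HasDerivAt (fun s => ((X, Y, s) : E3)) e3 T := by
    intro X Y T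
    exact (hasDerivAt_const T _).prodMk ((hasDerivAt_const T _).prodMk (hasDerivAt_id T))
  have hu_x : ∀ X Y T, pdx u X Y T = pd e1 U (X, Y, T) := by
    intro X Y T
    exact (hasDerivAt_comp_curve hUd (hQx X Y T)).deriv
  have hu_y : ∀ X Y T, pdy u X Y T = pd e2 U (X, Y, T) := by
    intro X Y T
    exact (hasDerivAt_comp_curve hUd (hQy X Y T)).deriv
  have hu_t : ∀ X Y T, pdt u X Y T = pd e3 U (X, Y, T) := by
    intro X Y T
    exact (hasDerivAt_comp_curve hUd (hQt X Y T)).deriv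
  have hu_xx : ∀ X Y T, pdx (pdx u) X Y T = pd e1 (pd e1 U) (X, Y, T) := by
    intro X Y T
    show deriv (fun s => pdx u s Y T) X = _
    refine HasDerivAt.deriv ?_
    simp only [hu_x]
    exact hasDerivAt_comp_curve (hU1d e1) (hQx X Y T)
  have hu_xy : ∀ X Y T, pdx (pdy u) X Y T = pd e1 (pd e2 U) (X, Y, T) := by
    intro X Y T
    show deriv (fun s => pdy u s Y T) X = _
    refine HasDerivAt.deriv ?_
    simp only [hu_y]
    exact hasDerivAt_comp_curve (hU1d e2) (hQx X Y T)
  have hu_yy : ∀ X Y T, pdy (pdy u) X Y T = pd e2 (pd e2 U) (X, Y, T) := by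
    intro X Y T
    show deriv (fun s => pdy u X s T) Y = _
    refine HasDerivAt.deriv ?_
    simp only [hu_y]
    exact hasDerivAt_comp_curve (hU1d e2) (hQy X Y T)
  have huterm1 : ∀ X Y T,
      pdx (fun x y t => pdt u x y t + u x y t * pdx u x y t + pdx (pdx u) x y t) X Y T =
      pd e1 (pd e3 U) (X, Y, T)
        + (pd e1 U (X, Y, T) * pd e1 U (X, Y, T) + U (X, Y, T) * pd e1 (pd e1 U) (X, Y, T))
        + pd e1 (pd e1 (pd e1 U)) (X, Y, T) := by
    intro X Y T
    show deriv (fun s => pdt u s Y T + u s Y T * pdx u s Y T + pdx (pdx u) s Y T) X = _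
    refine HasDerivAt.deriv ?_
    simp only [hu_t, hu_x, hu_xx]
    refine HasDerivAt.add (HasDerivAt.add ?_ ?_) ?_
    · exact hasDerivAt_comp_curve (hU1d e3) (hQx X Y T)
    · exact (hasDerivAt_comp_curve hUd (hQx X Y T)).mul
        (hasDerivAt_comp_curve (hU1d e1) (hQx X Y T))
    · exact hasDerivAt_comp_curve (hU2d e1 e1) (hQx X Y T)
  -- now the main computation
  intro x y t
  have heq' := heq (x - A t * (lam * y - lam ^ 2 * η t / 2)) (y - lam * η t) t
  rw [huterm1, hu_yy, hu_xy, hu_xx] at heq'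
  rw [hterm1, hv_yy, hv_xy, hv_xx]
  simp only [hPdef]
  set Q : E3 := (x - A t * (lam * y - lam ^ 2 * η t / 2), y - lam * η t, t) with hQdef
  have hsym : ∀ vv ww : E3, fderiv ℝ (fderiv ℝ U) Q vv ww = fderiv ℝ (fderiv ℝ U) Q ww vv :=
    (hU.contDiffAt.isSymmSndFDerivAt (by simp; exact WithTop.coe_le_coe.mpr le_top)).eq
  simp only [pd_pd hU, pd_pd (hU1 e1)] at heq' ⊢
  rw [clm2_full (fderiv ℝ (fderiv ℝ U) Q) e1
        (-(A' t * (lam * y - lam ^ 2 * η t / 2) + A t * -(lam ^ 2 * deriv η t / 2)),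
          -(lam * deriv η t), 1),
      clm2_full (fderiv ℝ (fderiv ℝ U) Q) (-(A t * lam), 1, 0) (-(A t * lam), 1, 0),
      clm2_full (fderiv ℝ (fderiv ℝ U) Q) e1 (-(A t * lam), 1, 0),
      hsym e2 e1]
  simp only [e1, e2, e3] at heq' ⊢
  simp only [hAdef, hA'def, hBdef, Acoef, Bcoef]
  rcases hε with rfl | rfl <;> linear_combination heq'
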